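/- For (α, β) ∈ (0, π/3]², define I(α, β) := ((π − 3α) cos α + sin 3α) · ((π − 3β) cos β + sin 3β) · ( sin α · sin β / ( sin²β · (π − α + sin α cos α) + sin²α · (π − β + sin β cos β) ) )³. Then as v → 0⁺, ∫₀^{v} ∫₀^{v} I(α, β) dβ dα = v²/(16π) + o(v²). -/

import Mathlib

open Real

noncomputable def Fz (α β : ℝ) : ℝ :=
  ((π - 3 * α) * Real.cos α + Real.sin (3 * α)) *
    ((π - 3 * β) * Real.cos β + Real.sin (3 * β)) *
    (Real.sin α * Real.sin β /
        (Real.sin β ^ 2 * (π - α + Real.sin α * Real.cos α) +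
          Real.sin α ^ 2 * (π - β + Real.sin β * Real.cos β))) ^ 3

noncomputable def Jz (α β : ℝ) : ℝ := (1 / π) * (α * β / (α ^ 2 + β ^ 2)) ^ 3

lemma Fz_zero_left (β : ℝ) : Fz 0 β = 0 := by simp [Fz]
lemma Fz_zero_right (α : ℝ) : Fz α 0 = 0 := by simp [Fz]
lemma Jz_zero_left (β : ℝ) : Jz 0 β = 0 := by simp [Jz]
lemma Jz_zero_right (α : ℝ) : Jz α 0 = 0 := by simp [Jz]

lemma Jz_nonneg {α β : ℝ} (hα : 0 ≤ α) (hβ : 0 ≤ β) : 0 ≤ Jz α β := by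
  have h1 : 0 ≤ α * β / (α ^ 2 + β ^ 2) := div_nonneg (mul_nonneg hα hβ) (by positivity)
  have hπ := Real.pi_pos
  unfold Jz
  exact mul_nonneg (by positivity) (pow_nonneg h1 3)

lemma Jz_le {α β : ℝ} (hα : 0 ≤ α) (hβ : 0 ≤ β) : Jz α β ≤ 1 / (8 * π) := by
  have hπ := Real.pi_pos
  have h1 : α * β / (α ^ 2 + β ^ 2) ≤ 1 / 2 := by
    rcases eq_or_lt_of_le (by positivity : (0:ℝ) ≤ α ^ 2 + β ^ 2) with h | h
    · rw [← h]; simp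
    · rw [div_le_div_iff₀ h (by norm_num)]; nlinarith [sq_nonneg (α - β)]
  have h0 : 0 ≤ α * β / (α ^ 2 + β ^ 2) := div_nonneg (mul_nonneg hα hβ) (by positivity)
  have h3 : (α * β / (α ^ 2 + β ^ 2)) ^ 3 ≤ (1/2 : ℝ) ^ 3 := pow_le_pow_left₀ h0 h1 3
  calc Jz α β ≤ (1/π) * (1/2:ℝ)^3 := by
        unfold Jz; exact mul_le_mul_of_nonneg_left h3 (by positivity)
    _ = 1 / (8 * π) := by field_simp; ring

lemma poly_hi {δ : ℝ} (hδ0 : 0 < δ) (hδ : δ ≤ 1/20) :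
    (1 + δ)^2 ≤ (1 + 30*δ) * (1 - δ)^9 := by
  have h9 : 1 + 9*(-δ) ≤ (1 + (-δ))^9 := one_add_mul_le_pow (by linarith) 9
  have h9' : 1 - 9*δ ≤ (1 - δ)^9 := by rw [show (1:ℝ) - δ = 1 + (-δ) by ring]; linarith
  nlinarith [sq_nonneg δ, mul_pos hδ0 hδ0]

lemma poly_lo {δ : ℝ} (hδ0 : 0 < δ) (hδ : δ ≤ 1/20) :
    (1 - 11*δ) * (1 + δ)^3 ≤ (1 - δ)^8 := by
  have h8 : 1 + 8*(-δ) ≤ (1 + (-δ))^8 := one_add_mul_le_pow (by linarith) 8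
  have h8' : 1 - 8*δ ≤ (1 - δ)^8 := by rw [show (1:ℝ) - δ = 1 + (-δ) by ring]; linarith
  nlinarith [sq_nonneg δ, pow_pos hδ0 3, pow_pos hδ0 4]

set_option maxHeartbeats 800000 in
lemma sandwich {δ A B p q W1 W2 α β : ℝ} (hδ0 : 0 < δ) (hδ : δ ≤ 1/20)
    (hα : 0 < α) (hβ : 0 < β)
    (hA1 : (1-δ)*π ≤ A) (hA2 : A ≤ (1+δ)*π)
    (hB1 : (1-δ)*π ≤ B) (hB2 : B ≤ (1+δ)*π)
    (hp1 : (1-δ)*α ≤ p) (hp2 : p ≤ α)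
    (hq1 : (1-δ)*β ≤ q) (hq2 : q ≤ β)
    (hW11 : (1-δ)*π ≤ W1) (hW12 : W1 ≤ (1+δ)*π)
    (hW21 : (1-δ)*π ≤ W2) (hW22 : W2 ≤ (1+δ)*π) :
    (1 - 11*δ) * ((1/π) * (α*β/(α^2+β^2))^3) ≤ A*B*(p*q/(q^2*W1+p^2*W2))^3 ∧
      A*B*(p*q/(q^2*W1+p^2*W2))^3 ≤ (1 + 30*δ) * ((1/π) * (α*β/(α^2+β^2))^3) := by
  have hπ := Real.pi_pos
  have hδ1 : (0:ℝ) < 1 - δ := by linarith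
  have hδ1' : (0:ℝ) < 1 + δ := by linarith
  have hp0 : 0 < p := lt_of_lt_of_le (by positivity) hp1
  have hq0 : 0 < q := lt_of_lt_of_le (by positivity) hq1
  have hW10 : 0 < W1 := lt_of_lt_of_le (by positivity) hW11
  have hW20 : 0 < W2 := lt_of_lt_of_le (by positivity) hW21
  have hA0 : 0 < A := lt_of_lt_of_le (by positivity) hA1
  have hB0 : 0 < B := lt_of_lt_of_le (by positivity) hB1
  have hs : 0 < α^2 + β^2 := by positivity
  have hD0 : 0 < q^2*W1 + p^2*W2 := by positivity
  -- denominator bounds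
  have hq2' : ((1-δ)*β)^2 ≤ q^2 := pow_le_pow_left₀ (by positivity) hq1 2
  have hp2' : ((1-δ)*α)^2 ≤ p^2 := pow_le_pow_left₀ (by positivity) hp1 2
  have hqs : q^2 ≤ β^2 := pow_le_pow_left₀ hq0.le hq2 2
  have hps : p^2 ≤ α^2 := pow_le_pow_left₀ hp0.le hp2 2
  have hDlow : (1-δ)^3 * π * (α^2+β^2) ≤ q^2*W1 + p^2*W2 := by
    have h1 : ((1-δ)*β)^2 * ((1-δ)*π) ≤ q^2*W1 :=
      mul_le_mul hq2' hW11 (by positivity) (by positivity)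
    have h2 : ((1-δ)*α)^2 * ((1-δ)*π) ≤ p^2*W2 :=
      mul_le_mul hp2' hW21 (by positivity) (by positivity)
    have e : (1-δ)^3 * π * (α^2+β^2) = ((1-δ)*β)^2 * ((1-δ)*π) + ((1-δ)*α)^2 * ((1-δ)*π) := by
      ring
    rw [e]; exact add_le_add h1 h2
  have hDhigh : q^2*W1 + p^2*W2 ≤ (1+δ) * π * (α^2+β^2) := by
    have h1 : q^2*W1 ≤ β^2 * ((1+δ)*π) := mul_le_mul hqs hW12 hW10.le (by positivity)
    have h2 : p^2*W2 ≤ α^2 * ((1+δ)*π) := mul_le_mul hps hW22 hW20.le (by positivity)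
    have e : (1+δ) * π * (α^2+β^2) = β^2 * ((1+δ)*π) + α^2 * ((1+δ)*π) := by ring
    rw [e]; exact add_le_add h1 h2
  -- ratio bounds
  have hRhigh : p*q/(q^2*W1+p^2*W2) ≤ α*β/((1-δ)^3*π*(α^2+β^2)) :=
    div_le_div₀ (by positivity) (mul_le_mul hp2 hq2 hq0.le hα.le) (by positivity) hDlow
  have hRlow : (1-δ)^2*(α*β)/((1+δ)*π*(α^2+β^2)) ≤ p*q/(q^2*W1+p^2*W2) :=
    div_le_div₀ (mul_pos hp0 hq0).le
      (by
        have h := mul_le_mul hp1 hq1 (by positivity) hp0.le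
        have e : (1-δ)^2*(α*β) = ((1-δ)*α) * ((1-δ)*β) := by ring
        rw [e]; exact h) hD0 hDhigh
  have hR0 : (0:ℝ) ≤ p*q/(q^2*W1+p^2*W2) := by positivity
  have hc_high : (p*q/(q^2*W1+p^2*W2))^3 ≤ (α*β/((1-δ)^3*π*(α^2+β^2)))^3 :=
    pow_le_pow_left₀ hR0 hRhigh 3
  have hc_low : ((1-δ)^2*(α*β)/((1+δ)*π*(α^2+β^2)))^3 ≤ (p*q/(q^2*W1+p^2*W2))^3 :=
    pow_le_pow_left₀ (by positivity) hRlow 3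
  constructor
  · -- lower bound
    have step1 : ((1-δ)*π) * ((1-δ)*π) * ((1-δ)^2*(α*β)/((1+δ)*π*(α^2+β^2)))^3 ≤
        A * B * (p*q/(q^2*W1+p^2*W2))^3 := by
      have hAB : ((1-δ)*π) * ((1-δ)*π) ≤ A * B :=
        mul_le_mul hA1 hB1 (by positivity) hA0.le
      exact mul_le_mul hAB hc_low (by positivity) (by positivity)
    have eq1 : ((1-δ)*π) * ((1-δ)*π) * ((1-δ)^2*(α*β)/((1+δ)*π*(α^2+β^2)))^3 =
        ((1-δ)^8/(1+δ)^3) * ((1/π) * (α*β/(α^2+β^2))^3) := by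
      field_simp
    have hcoef : (1 - 11*δ) ≤ (1-δ)^8/(1+δ)^3 := by
      rw [le_div_iff₀ (by positivity)]
      exact poly_lo hδ0 hδ
    have hJ0 : (0:ℝ) ≤ (1/π) * (α*β/(α^2+β^2))^3 := by positivity
    calc (1 - 11*δ) * ((1/π) * (α*β/(α^2+β^2))^3)
        ≤ ((1-δ)^8/(1+δ)^3) * ((1/π) * (α*β/(α^2+β^2))^3) :=
          mul_le_mul_of_nonneg_right hcoef hJ0
      _ = ((1-δ)*π) * ((1-δ)*π) * ((1-δ)^2*(α*β)/((1+δ)*π*(α^2+β^2)))^3 := eq1.symm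
      _ ≤ A * B * (p*q/(q^2*W1+p^2*W2))^3 := step1
  · -- upper bound
    have step1 : A * B * (p*q/(q^2*W1+p^2*W2))^3 ≤
        ((1+δ)*π) * ((1+δ)*π) * (α*β/((1-δ)^3*π*(α^2+β^2)))^3 := by
      have hAB : A * B ≤ ((1+δ)*π) * ((1+δ)*π) :=
        mul_le_mul hA2 hB2 hB0.le (by positivity)
      exact mul_le_mul hAB hc_high (by positivity) (by positivity)
    have eq1 : ((1+δ)*π) * ((1+δ)*π) * (α*β/((1-δ)^3*π*(α^2+β^2)))^3 =
        ((1+δ)^2/(1-δ)^9) * ((1/π) * (α*β/(α^2+β^2))^3) := by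
      field_simp
    have hcoef : (1+δ)^2/(1-δ)^9 ≤ 1 + 30*δ := by
      rw [div_le_iff₀ (by positivity)]
      exact poly_hi hδ0 hδ
    have hJ0 : (0:ℝ) ≤ (1/π) * (α*β/(α^2+β^2))^3 := by positivity
    calc A * B * (p*q/(q^2*W1+p^2*W2))^3
        ≤ ((1+δ)*π) * ((1+δ)*π) * (α*β/((1-δ)^3*π*(α^2+β^2)))^3 := step1
      _ = ((1+δ)^2/(1-δ)^9) * ((1/π) * (α*β/(α^2+β^2))^3) := eq1
      _ ≤ (1 + 30*δ) * ((1/π) * (α*β/(α^2+β^2))^3) :=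
          mul_le_mul_of_nonneg_right hcoef hJ0

lemma sin_bounds {δ t : ℝ} (hδ0 : 0 < δ) (hδ : δ ≤ 1/20) (ht0 : 0 < t) (ht : t ≤ δ/2) :
    (1-δ)*t ≤ Real.sin t ∧ Real.sin t ≤ t := by
  have h1 : t ≤ 1 := by linarith
  constructor
  · have h2 := Real.sin_gt_sub_cube ht0
    have h3 : t*t ≤ δ/2 := by nlinarith [mul_le_mul h1 ht ht0.le zero_le_one]
    have h4 : t*(t*t) ≤ t*(δ/2) := mul_le_mul_of_nonneg_left h3 ht0.le
    nlinarith [h2, h4, mul_nonneg ht0.le hδ0.le]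
  · exact (Real.sin_lt ht0).le

lemma w_bounds {δ t : ℝ} (hδ0 : 0 < δ) (hδ : δ ≤ 1/20) (ht0 : 0 < t) (ht : t ≤ δ/2) :
    (1-δ)*π ≤ π - t + Real.sin t * Real.cos t ∧
      π - t + Real.sin t * Real.cos t ≤ (1+δ)*π := by
  have hπ3 := Real.pi_gt_three
  have hs0 : 0 ≤ Real.sin t := Real.sin_nonneg_of_nonneg_of_le_pi ht0.le (by linarith)
  have hc0 : 0 ≤ Real.cos t := Real.cos_nonneg_of_mem_Icc ⟨by linarith, by linarith⟩
  have hc1 : Real.cos t ≤ 1 := Real.cos_le_one t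
  have hst : Real.sin t ≤ t := (Real.sin_lt ht0).le
  constructor
  · nlinarith [mul_nonneg hs0 hc0]
  · nlinarith [mul_le_of_le_one_right hs0 hc1]


noncomputable def Kf (v α : ℝ) : ℝ := v^4 * α / (4 * π * (α^2 + v^2)^2)

lemma contOn_Jz {v α : ℝ} (hα : 0 < α) :
    ContinuousOn (fun β => Jz α β) (Set.uIcc (0:ℝ) v) := by
  apply ContinuousOn.mul continuousOn_const
  apply ContinuousOn.pow
  apply ContinuousOn.div (by fun_prop) (by fun_prop)
  intro β _
  positivity

lemma integral_Jz {v α : ℝ} (hv : 0 < v) (hα : 0 < α) :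
    ∫ β in (0:ℝ)..v, Jz α β = Kf v α := by
  have key : ∀ β ∈ Set.uIcc (0:ℝ) v,
      HasDerivAt (fun b => (1/π) * α^3 * (-(2*(α^2+b^2))⁻¹ + α^2 * (4*(α^2+b^2)^2)⁻¹))
        (Jz α β) β := by
    intro β _
    have h1 : HasDerivAt (fun b : ℝ => α^2 + b^2) (2*β) β := by
      simpa using (hasDerivAt_pow 2 β).const_add (α^2)
    have hne : (α^2+β^2) ≠ 0 := by positivity
    have h2 : HasDerivAt (fun b : ℝ => (2*(α^2+b^2))⁻¹)
        (-(2*(2*β)) / (2*(α^2+β^2))^2) β := (h1.const_mul 2).inv (by positivity)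
    have h3 : HasDerivAt (fun b : ℝ => (4*(α^2+b^2)^2)⁻¹)
        (-(4*(2*(α^2+β^2)^1*(2*β))) / (4*(α^2+β^2)^2)^2) β :=
      ((h1.pow 2).const_mul 4).inv (mul_ne_zero (by norm_num) (pow_ne_zero 2 hne))
    have h4 : HasDerivAt (fun b => (1/π) * α^3 * (-(2*(α^2+b^2))⁻¹ + α^2 * (4*(α^2+b^2)^2)⁻¹))
        ((1/π) * α^3 * (-(-(2*(2*β)) / (2*(α^2+β^2))^2) +
          α^2 * (-(4*(2*(α^2+β^2)^1*(2*β))) / (4*(α^2+β^2)^2)^2))) β :=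
      ((h2.neg.add (h3.const_mul (α^2))).const_mul ((1/π) * α^3))
    convert h4 using 1
    simp only [Jz]
    field_simp
    ring
  have hint : IntervalIntegrable (fun β => Jz α β) MeasureTheory.volume 0 v :=
    (contOn_Jz hα).intervalIntegrable
  rw [intervalIntegral.integral_eq_sub_of_hasDerivAt key hint]
  have hne : (α^2+v^2) ≠ 0 := by positivity
  have hne0 : (α:ℝ) ≠ 0 := ne_of_gt hα
  unfold Kf
  field_simp
  ring

lemma integral_Kf {v : ℝ} (hv : 0 < v) :
    ∫ α in (0:ℝ)..v, Kf v α = v^2 / (16*π) := by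
  have key : ∀ α ∈ Set.uIcc (0:ℝ) v,
      HasDerivAt (fun a => -(v^4 * (8*π*(a^2+v^2))⁻¹)) (Kf v α) α := by
    intro α _
    have h1 : HasDerivAt (fun a : ℝ => a^2 + v^2) (2*α) α := by
      simpa using (hasDerivAt_pow 2 α).add_const (v^2)
    have h2 : HasDerivAt (fun a : ℝ => (8*π*(a^2+v^2))⁻¹)
        (-(8*π*(2*α)) / (8*π*(α^2+v^2))^2) α := (h1.const_mul (8*π)).inv (by positivity)
    have h4 : HasDerivAt (fun a => -(v^4 * (8*π*(a^2+v^2))⁻¹))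
        (-(v^4 * (-(8*π*(2*α)) / (8*π*(α^2+v^2))^2))) α := (h2.const_mul (v^4)).neg
    convert h4 using 1
    have hπ := Real.pi_pos
    unfold Kf
    field_simp
    ring
  have hint : IntervalIntegrable (fun α => Kf v α) MeasureTheory.volume 0 v := by
    apply ContinuousOn.intervalIntegrable
    apply ContinuousOn.div (by fun_prop) (by fun_prop)
    intro α _
    positivity
  rw [intervalIntegral.integral_eq_sub_of_hasDerivAt key hint]
  have hπ := Real.pi_pos
  field_simp
  ring


lemma denom_pos {α β : ℝ} (hα : α ∈ Set.Ioc (0:ℝ) (π/3)) (hβ : β ∈ Set.Icc (0:ℝ) (π/3)) :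
    0 < Real.sin β ^ 2 * (π - α + Real.sin α * Real.cos α) +
        Real.sin α ^ 2 * (π - β + Real.sin β * Real.cos β) := by
  have hπ3 := Real.pi_gt_three
  have hsα : 0 < Real.sin α := Real.sin_pos_of_pos_of_lt_pi hα.1 (by linarith [hα.2])
  have hw2 : 0 < π - β + Real.sin β * Real.cos β := by
    have hs0 : 0 ≤ Real.sin β := Real.sin_nonneg_of_nonneg_of_le_pi hβ.1 (by linarith [hβ.2])
    have hc0 : 0 ≤ Real.cos β := Real.cos_nonneg_of_mem_Icc ⟨by linarith [hβ.1], by linarith [hβ.2]⟩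
    nlinarith [mul_nonneg hs0 hc0, hβ.2]
  have hw1 : 0 ≤ π - α + Real.sin α * Real.cos α := by
    have hs0 : 0 ≤ Real.sin α := hsα.le
    have hc0 : 0 ≤ Real.cos α := Real.cos_nonneg_of_mem_Icc ⟨by linarith [hα.1], by linarith [hα.2]⟩
    nlinarith [mul_nonneg hs0 hc0, hα.2]
  have h1 : 0 ≤ Real.sin β ^ 2 * (π - α + Real.sin α * Real.cos α) :=
    mul_nonneg (sq_nonneg _) hw1
  have h2 : 0 < Real.sin α ^ 2 * (π - β + Real.sin β * Real.cos β) :=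
    mul_pos (pow_pos hsα 2) hw2
  linarith

lemma contOn_Fz {v α : ℝ} (hv : 0 < v) (hvπ : v ≤ π/3) (hα : α ∈ Set.Ioc (0:ℝ) (π/3)) :
    ContinuousOn (fun β => Fz α β) (Set.uIcc (0:ℝ) v) := by
  rw [Set.uIcc_of_le hv.le]
  unfold Fz
  apply ContinuousOn.mul (ContinuousOn.mul continuousOn_const (by fun_prop))
  apply ContinuousOn.pow
  apply ContinuousOn.div (by fun_prop) (by fun_prop)
  intro β hβ
  exact ne_of_gt (denom_pos hα ⟨hβ.1, hβ.2.trans hvπ⟩)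

lemma meas_Fz : MeasureTheory.StronglyMeasurable (Function.uncurry Fz) := by
  apply Measurable.stronglyMeasurable
  unfold Function.uncurry Fz
  fun_prop


/-- For the integrand
`I(α,β) = ((π-3α)cos α + sin 3α)((π-3β)cos β + sin 3β)
  (sin α sin β / (sin²β (π - α + sin α cos α) + sin²α (π - β + sin β cos β)))³`
arising from the Blaschke–Petkantschin computation for adjacent small-angle
Poisson–Delaunay triangles, one has
`∫₀^v ∫₀^v I(α,β) dβ dα = v²/(16π) + o(v²)` as `v → 0⁺`. -/
theorem stmt12 (I : ℝ → ℝ → ℝ)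
    (hI : ∀ α ∈ Set.Ioc (0 : ℝ) (π / 3), ∀ β ∈ Set.Ioc (0 : ℝ) (π / 3),
      I α β = ((π - 3 * α) * Real.cos α + Real.sin (3 * α)) *
        ((π - 3 * β) * Real.cos β + Real.sin (3 * β)) *
        (Real.sin α * Real.sin β /
            (Real.sin β ^ 2 * (π - α + Real.sin α * Real.cos α) +
              Real.sin α ^ 2 * (π - β + Real.sin β * Real.cos β))) ^ 3) :
    ∀ ε > (0 : ℝ), ∃ v₀ : ℝ, 0 < v₀ ∧ v₀ ≤ π / 3 ∧ ∀ v : ℝ, 0 < v → v ≤ v₀ →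
      |(∫ α in (0 : ℝ)..v, ∫ β in (0 : ℝ)..v, I α β) - v ^ 2 / (16 * π)| ≤ ε * v ^ 2 := by
  intro ε hε
  have hπ := Real.pi_pos
  have hπ3 := Real.pi_gt_three
  set δ : ℝ := min ε (1/20) with hδdef
  have hδ0 : 0 < δ := lt_min hε (by norm_num)
  have hδ20 : δ ≤ 1/20 := min_le_right _ _
  have hδε : δ ≤ ε := min_le_left _ _
  have hca : ContinuousAt (fun t : ℝ => (π - 3*t) * Real.cos t + Real.sin (3*t)) 0 := by
    fun_prop
  obtain ⟨η, hη0, hη⟩ := Metric.continuousAt_iff.mp hca (π*δ) (by positivity)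
  refine ⟨min (π/3) (min (δ/2) (η/2)), by positivity, min_le_left _ _, ?_⟩
  intro v hv0 hvv₀
  have hvπ3 : v ≤ π/3 := le_trans hvv₀ (min_le_left _ _)
  have hvδ : v ≤ δ/2 := le_trans hvv₀ (le_trans (min_le_right _ _) (min_le_left _ _))
  have hvη : v ≤ η/2 := le_trans hvv₀ (le_trans (min_le_right _ _) (min_le_right _ _))
  -- bounds for the A-factor
  have hAb : ∀ t ∈ Set.Ioc (0:ℝ) v, (1-δ)*π ≤ (π - 3*t) * Real.cos t + Real.sin (3*t)
      ∧ (π - 3*t) * Real.cos t + Real.sin (3*t) ≤ (1+δ)*π := by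
    intro t ht
    have hd : dist t 0 < η := by
      rw [Real.dist_eq, sub_zero, abs_of_pos ht.1]; linarith [ht.2]
    have h2 := hη hd
    simp only [Real.dist_eq, mul_zero, Real.cos_zero, Real.sin_zero, mul_one, sub_zero,
      add_zero] at h2
    have h3 := abs_lt.mp h2
    constructor <;> nlinarith [h3.1, h3.2]
  -- pointwise sandwich on (0,v]²
  have hpt : ∀ α ∈ Set.Ioc (0:ℝ) v, ∀ β ∈ Set.Ioc (0:ℝ) v,
      (1 - 11*δ) * Jz α β ≤ Fz α β ∧ Fz α β ≤ (1 + 30*δ) * Jz α β := by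
    intro α hα β hβ
    obtain ⟨hA1, hA2⟩ := hAb α hα
    obtain ⟨hB1, hB2⟩ := hAb β hβ
    obtain ⟨hp1, hp2⟩ := sin_bounds hδ0 hδ20 hα.1 (le_trans hα.2 hvδ)
    obtain ⟨hq1, hq2⟩ := sin_bounds hδ0 hδ20 hβ.1 (le_trans hβ.2 hvδ)
    obtain ⟨hW11, hW12⟩ := w_bounds hδ0 hδ20 hα.1 (le_trans hα.2 hvδ)
    obtain ⟨hW21, hW22⟩ := w_bounds hδ0 hδ20 hβ.1 (le_trans hβ.2 hvδ)
    unfold Fz Jz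
    exact sandwich hδ0 hδ20 hα.1 hβ.1 hA1 hA2 hB1 hB2 hp1 hp2 hq1 hq2 hW11 hW12 hW21 hW22
  have hptIcc : ∀ α ∈ Set.Ioc (0:ℝ) v, ∀ β ∈ Set.Icc (0:ℝ) v,
      (1 - 11*δ) * Jz α β ≤ Fz α β ∧ Fz α β ≤ (1 + 30*δ) * Jz α β := by
    intro α hα β hβ
    rcases eq_or_lt_of_le hβ.1 with h | h
    · rw [← h]; simp [Fz_zero_right, Jz_zero_right]
    · exact hpt α hα β ⟨h, hβ.2⟩
  -- integrability of Fz in β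
  have hFint : ∀ α ∈ Set.Ioc (0:ℝ) v,
      IntervalIntegrable (fun β => Fz α β) MeasureTheory.volume 0 v :=
    fun α hα => (contOn_Fz hv0 hvπ3 ⟨hα.1, le_trans hα.2 hvπ3⟩).intervalIntegrable
  have hJint : ∀ α : ℝ, 0 < α →
      IntervalIntegrable (fun β => Jz α β) MeasureTheory.volume 0 v :=
    fun α h => (contOn_Jz h).intervalIntegrable
  set g : ℝ → ℝ := fun α => ∫ β in (0:ℝ)..v, Fz α β with hgdef
  -- bounds on g
  have hgl : ∀ α ∈ Set.Icc (0:ℝ) v, (1 - 11*δ) * Kf v α ≤ g α := by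
    intro α hα
    rcases eq_or_lt_of_le hα.1 with h | h
    · rw [← h]; simp [hgdef, Fz_zero_left, Kf]
    · have hα' : α ∈ Set.Ioc (0:ℝ) v := ⟨h, hα.2⟩
      have h1 : (∫ β in (0:ℝ)..v, (1 - 11*δ) * Jz α β) ≤ ∫ β in (0:ℝ)..v, Fz α β :=
        intervalIntegral.integral_mono_on hv0.le ((hJint α h).const_mul _) (hFint α hα')
          (fun β hβ => (hptIcc α hα' β hβ).1)
      rwa [intervalIntegral.integral_const_mul, integral_Jz hv0 h] at h1
  have hgu : ∀ α ∈ Set.Icc (0:ℝ) v, g α ≤ (1 + 30*δ) * Kf v α := by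
    intro α hα
    rcases eq_or_lt_of_le hα.1 with h | h
    · rw [← h]; simp [hgdef, Fz_zero_left, Kf]
    · have hα' : α ∈ Set.Ioc (0:ℝ) v := ⟨h, hα.2⟩
      have h1 : (∫ β in (0:ℝ)..v, Fz α β) ≤ ∫ β in (0:ℝ)..v, (1 + 30*δ) * Jz α β :=
        intervalIntegral.integral_mono_on hv0.le (hFint α hα') ((hJint α h).const_mul _)
          (fun β hβ => (hptIcc α hα' β hβ).2)
      rwa [intervalIntegral.integral_const_mul, integral_Jz hv0 h] at h1
  -- integrability of g
  have hgsm : MeasureTheory.StronglyMeasurable g := by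
    have h := meas_Fz.integral_prod_right
      (ν := MeasureTheory.volume.restrict (Set.Ioc (0:ℝ) v))
    have he : g = fun α => ∫ β in Set.Ioc (0:ℝ) v, Fz α β :=
      funext fun α => intervalIntegral.integral_of_le hv0.le
    rw [he]; exact h
  have hgbound : ∀ α ∈ Set.Ioc (0:ℝ) v, ‖g α‖ ≤ (1/π) * |v - 0| := by
    intro α hα
    apply intervalIntegral.norm_integral_le_of_norm_le_const
    intro β hβ
    rw [Set.uIoc_of_le hv0.le] at hβ
    obtain ⟨hlo', hhi'⟩ := hpt α hα β hβ
    have hJ0 : 0 ≤ Jz α β := Jz_nonneg hα.1.le hβ.1.le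
    have hJle : Jz α β ≤ 1/(8*π) := Jz_le hα.1.le hβ.1.le
    have hFz0 : 0 ≤ Fz α β := le_trans (by nlinarith) hlo'
    rw [Real.norm_eq_abs, abs_of_nonneg hFz0]
    have h1 : Fz α β ≤ (1 + 30*δ) * (1/(8*π)) :=
      le_trans hhi' (mul_le_mul_of_nonneg_left hJle (by linarith))
    have h2 : (1 + 30*δ) * (1/(8*π)) ≤ (5/2) * (1/(8*π)) :=
      mul_le_mul_of_nonneg_right (by linarith) (by positivity)
    have h3 : (5/2 : ℝ) * (1/(8*π)) ≤ 1/π := by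
      have he : (5/2 : ℝ) * (1/(8*π)) = 5/(16*π) := by ring
      rw [he, div_le_div_iff₀ (by positivity) hπ]
      nlinarith
    linarith
  have hgIntOn : MeasureTheory.IntegrableOn g (Set.Ioc (0:ℝ) v) MeasureTheory.volume := by
    apply MeasureTheory.Integrable.mono'
      (g := fun _ => (1/π) * |v - 0|)
    · exact MeasureTheory.integrableOn_const measure_Ioc_lt_top.ne
    · exact hgsm.aestronglyMeasurable
    · exact (MeasureTheory.ae_restrict_iff' measurableSet_Ioc).mpr
        (MeasureTheory.ae_of_all _ fun α hα => hgbound α hα)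
  have hgInt : IntervalIntegrable g MeasureTheory.volume 0 v := by
    rw [intervalIntegrable_iff, Set.uIoc_of_le hv0.le]; exact hgIntOn
  -- integrability of Kf
  have hKint : IntervalIntegrable (fun α => Kf v α) MeasureTheory.volume 0 v := by
    apply ContinuousOn.intervalIntegrable
    apply ContinuousOn.div (by fun_prop) (by fun_prop)
    intro α _
    positivity
  -- outer comparison
  have hlo : (1 - 11*δ) * (v^2/(16*π)) ≤ ∫ α in (0:ℝ)..v, g α := by
    have h1 : (∫ α in (0:ℝ)..v, (1 - 11*δ) * Kf v α) ≤ ∫ α in (0:ℝ)..v, g α :=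
      intervalIntegral.integral_mono_on hv0.le (hKint.const_mul _) hgInt hgl
    rwa [intervalIntegral.integral_const_mul, integral_Kf hv0] at h1
  have hhi : (∫ α in (0:ℝ)..v, g α) ≤ (1 + 30*δ) * (v^2/(16*π)) := by
    have h1 : (∫ α in (0:ℝ)..v, g α) ≤ ∫ α in (0:ℝ)..v, (1 + 30*δ) * Kf v α :=
      intervalIntegral.integral_mono_on hv0.le hgInt (hKint.const_mul _) hgu
    rwa [intervalIntegral.integral_const_mul, integral_Kf hv0] at h1
  -- rewrite the double integral of I
  have hII : (∫ α in (0:ℝ)..v, ∫ β in (0:ℝ)..v, I α β) = ∫ α in (0:ℝ)..v, g α := by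
    apply intervalIntegral.integral_congr_ae
    filter_upwards with α hα
    rw [Set.uIoc_of_le hv0.le] at hα
    apply intervalIntegral.integral_congr_ae
    filter_upwards with β hβ
    rw [Set.uIoc_of_le hv0.le] at hβ
    rw [hI α ⟨hα.1, hα.2.trans hvπ3⟩ β ⟨hβ.1, hβ.2.trans hvπ3⟩]
    rfl
  rw [hII]
  have hM48 : v^2/(16*π) ≤ v^2/48 := by
    apply div_le_div_of_nonneg_left (by positivity) (by norm_num) (by nlinarith)
  have hM0 : (0:ℝ) ≤ v^2/(16*π) := by positivity
  have e1 : 11*δ*(v^2/(16*π)) ≤ 11*δ*(v^2/48) :=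
    mul_le_mul_of_nonneg_left hM48 (by linarith)
  have e1' : 30*δ*(v^2/(16*π)) ≤ 30*δ*(v^2/48) :=
    mul_le_mul_of_nonneg_left hM48 (by linarith)
  have e2 : δ*v^2 ≤ ε*v^2 := mul_le_mul_of_nonneg_right hδε (sq_nonneg v)
  rw [abs_le]
  constructor
  · nlinarith [hlo]
  · nlinarith [hhi]
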